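/- The set of factors of an infinite word w has a finite separating set of factors if and only if w is ultimately periodic. -/
import Mathlib


/-- `npow w n` is the word `w` repeated `n` times. -/
def npow {α : Type*} (w : List α) : ℕ → List α
  | 0 => []
  | n + 1 => w ++ npow w n

/-- `occ w x` is the number of occurrences of `x` as a factor of `w`,
i.e. the number of factorizations `w = s ++ x ++ t`. -/
def occ {α : Type*} [DecidableEq α] (w x : List α) : ℕ :=
  ((List.range (w.length + 1)).filter (fun i => x <+: w.drop i)).length

/-- A nonempty word is primitive if it is not a power of a shorter word. -/
def Primitive {α : Type*} (p : List α) : Prop :=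
  p ≠ [] ∧ ∀ (q : List α) (n : ℕ), p = npow q n → q = p

/-- `u` and `v` are `k`-abelian equivalent. -/
def KAbEq {α : Type*} [DecidableEq α] (k : ℕ) (u v : List α) : Prop :=
  ∀ x : List α, x.length ≤ k → occ u x = occ v x

/-- `X` is a separating set of factors of `L`. -/
def IsSSF {α : Type*} [DecidableEq α] (X L : Set (List α)) : Prop :=
  ∀ u ∈ L, ∀ v ∈ L, u ≠ v → ∃ x ∈ X, occ u x ≠ occ v x

/-- `L` has a finite separating set of factors. -/
def HasFiniteSSF {α : Type*} [DecidableEq α] (L : Set (List α)) : Prop :=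
  ∃ X : Set (List α), X.Finite ∧ IsSSF X L

/-- `x` is a (finite) factor of the infinite word `W`. -/
def FactorOf {α : Type*} (x : List α) (W : ℕ → α) : Prop :=
  ∃ i : ℕ, x = (List.range x.length).map fun j => W (i + j)

/-- The infinite word `W` is ultimately periodic. -/
def UltPeriodic {α : Type*} (W : ℕ → α) : Prop :=
  ∃ N p : ℕ, 0 < p ∧ ∀ n, N ≤ n → W (n + p) = W n

namespace Stmt19Aux

set_option linter.unusedSectionVars false

variable {α : Type*} [DecidableEq α]

def win (W : ℕ → α) (i n : ℕ) : List α := (List.range n).map fun j => W (i + j)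

@[simp] lemma win_length (W : ℕ → α) (i n : ℕ) : (win W i n).length = n := by simp [win]

lemma win_getElem (W : ℕ → α) {i n t : ℕ} (ht : t < n) :
    (win W i n)[t]'(by simp [ht]) = W (i + t) := by simp [win]

lemma win_append (W : ℕ → α) (i m r : ℕ) :
    win W i (m + r) = win W i m ++ win W (i + m) r := by
  unfold win
  rw [List.range_add, List.map_append, List.map_map]
  congr 1
  apply List.map_congr_left
  intro a _
  simp [Function.comp, add_assoc]

lemma win_drop (W : ℕ → α) {i n j : ℕ} (h : j ≤ n) :
    (win W i n).drop j = win W (i + j) (n - j) := by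
  obtain ⟨r, rfl⟩ : ∃ r, n = j + r := ⟨n - j, by omega⟩
  rw [win_append, List.drop_left' (by simp)]
  congr 1
  omega

lemma prefix_win_iff {W : ℕ → α} {i n : ℕ} {x : List α} :
    x <+: win W i n ↔ x.length ≤ n ∧ x = win W i x.length := by
  constructor
  · intro h
    have hl : x.length ≤ n := by simpa using h.length_le
    refine ⟨hl, ?_⟩
    obtain ⟨r, rfl⟩ : ∃ r, n = x.length + r := ⟨n - x.length, by omega⟩
    have := List.prefix_iff_eq_take.mp h
    rwa [win_append, List.take_left' (by simp)] at this
  · rintro ⟨hl, hx⟩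
    obtain ⟨r, rfl⟩ : ∃ r, n = x.length + r := ⟨n - x.length, by omega⟩
    rw [win_append, ← hx]
    exact List.prefix_append _ _

lemma length_filter_range (p : ℕ → Bool) (m : ℕ) :
    ((List.range m).filter p).length = ∑ i ∈ Finset.range m, if p i then 1 else 0 := by
  induction m with
  | zero => simp
  | succ m ih =>
    rw [List.range_succ, List.filter_append, List.length_append, ih, Finset.sum_range_succ]
    cases hp : p m <;> simp [List.filter, hp]

lemma occ_eq_sum (w x : List α) :
    occ w x = ∑ i ∈ Finset.range (w.length + 1), if x <+: w.drop i then 1 else 0 := by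
  unfold occ
  rw [length_filter_range]
  apply Finset.sum_congr rfl
  intro i _
  simp

lemma occ_nil (w : List α) : occ w ([] : List α) = w.length + 1 := by
  rw [occ_eq_sum]
  simp

lemma occ_of_length_eq {w x : List α} (h : x.length = w.length) :
    occ w x = if x = w then 1 else 0 := by
  rw [occ_eq_sum]
  rw [Finset.sum_eq_single 0]
  · simp only [List.drop_zero]
    congr 1
    rw [List.prefix_iff_eq_take, h, List.take_length]
  · intro i hi hi0
    have hmem := Finset.mem_range.mp hi
    have : ¬ (x <+: w.drop i) := by
      intro hpre
      have := hpre.length_le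
      rw [List.length_drop] at this
      omega
    simp [this]
  · simp

lemma occ_cons_sum [Fintype α] (w x : List α) :
    occ w x = (∑ a : α, occ w (a :: x)) + if x <+: w then 1 else 0 := by
  have key : ∀ i ∈ Finset.range (w.length + 1),
      (∑ a : α, if (a :: x) <+: w.drop i then (1:ℕ) else 0) =
      if i < w.length ∧ x <+: w.drop (i+1) then (1:ℕ) else 0 := by
    intro i hi
    by_cases h : i < w.length
    · rw [List.drop_eq_getElem_cons h]
      simp only [List.cons_prefix_cons]
      by_cases hx : x <+: w.drop (i+1)
      · simp only [hx, and_true, h, true_and]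
        rw [Finset.sum_ite_eq' Finset.univ (w[i]) (fun _ => (1:ℕ))]
        simp
      · simp [hx, h]
    · have hieq : i = w.length := by
        have := Finset.mem_range.mp hi; omega
      subst hieq
      simp [List.drop_length]
  have rhs : (∑ a : α, occ w (a :: x)) =
      ∑ i ∈ Finset.range w.length, if x <+: w.drop (i+1) then (1:ℕ) else 0 := by
    calc (∑ a : α, occ w (a :: x))
        = ∑ a : α, ∑ i ∈ Finset.range (w.length + 1),
            if (a :: x) <+: w.drop i then (1:ℕ) else 0 := by
          apply Finset.sum_congr rfl; intro a _; exact occ_eq_sum w (a :: x)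
      _ = ∑ i ∈ Finset.range (w.length + 1), ∑ a : α,
            if (a :: x) <+: w.drop i then (1:ℕ) else 0 := Finset.sum_comm
      _ = ∑ i ∈ Finset.range (w.length + 1),
            if i < w.length ∧ x <+: w.drop (i+1) then (1:ℕ) else 0 :=
          Finset.sum_congr rfl key
      _ = ∑ i ∈ Finset.range w.length, if x <+: w.drop (i+1) then (1:ℕ) else 0 := by
          rw [Finset.sum_range_succ]
          simp only [lt_self_iff_false, false_and, if_false, add_zero]
          apply Finset.sum_congr rfl
          intro i hi
          have := Finset.mem_range.mp hi
          simp [this]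
  rw [rhs, occ_eq_sum, Finset.sum_range_succ']
  simp

lemma prefix_iff_of_occ [Fintype α] {u v x : List α} {K : ℕ}
    (hocc : ∀ y : List α, y.length ≤ K → occ u y = occ v y)
    (hx : x.length < K) : (x <+: u ↔ x <+: v) := by
  have h1 := occ_cons_sum u x
  have h2 := occ_cons_sum v x
  have hxx : occ u x = occ v x := hocc x (by omega)
  have hs : (∑ a : α, occ u (a :: x)) = ∑ a : α, occ v (a :: x) :=
    Finset.sum_congr rfl fun a _ => hocc (a :: x) (by simp; omega)
  rw [hxx, h2, hs] at h1
  have hit : (if x <+: v then (1:ℕ) else 0) = if x <+: u then 1 else 0 :=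
    Nat.add_left_cancel h1
  by_cases h : x <+: u <;> by_cases h' : x <+: v <;> simp_all

end Stmt19Aux


namespace Stmt19Aux

variable {α : Type*} [DecidableEq α] [Fintype α]

theorem easy_dir (W : ℕ → α) (h : UltPeriodic W) :
    HasFiniteSSF {x : List α | FactorOf x W} := by
  classical
  obtain ⟨N, pp, hpp, hper⟩ := h
  set K := N + pp + 1 with hKdef
  refine ⟨{x : List α | x.length ≤ K}, ?_, ?_⟩
  · exact List.finite_length_le α K
  · intro u hu v hv huv
    obtain ⟨i, hi⟩ := hu
    obtain ⟨i', hi'⟩ := hv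
    by_cases hlen : u.length = v.length
    · by_cases hn : u.length ≤ K
      · refine ⟨u, hn, ?_⟩
        rw [occ_of_length_eq rfl, occ_of_length_eq hlen]
        simp [huv]
      · -- long factors: show they must be equal, contradiction
        by_contra hc
        push_neg at hc
        exfalso
        apply huv
        have hocc : ∀ y : List α, y.length ≤ K → occ u y = occ v y := fun y hy => hc y hy
        have hu' : u = win W i u.length := hi
        have hv' : v = win W i' v.length := hi'
        have hnK : K < u.length := by omega
        -- prefixes of length ≤ N + pp agree
        have hpre : ∀ t, t < N + pp → W (i + t) = W (i' + t) := by
          intro t ht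
          have h1 : win W i (t+1) <+: u := by
            rw [hu', prefix_win_iff]
            constructor
            · simp; omega
            · simp
          have h2 : win W i (t+1) <+: v :=
            (prefix_iff_of_occ hocc (by simp; omega)).mp h1
          rw [hv', prefix_win_iff] at h2
          have h3 : win W i (t+1) = win W i' (t+1) := by
            have := h2.2
            rwa [win_length] at this
          have h4 : (win W i (t+1))[t]'(by simp) = (win W i' (t+1))[t]'(by simp) := by
            simp only [h3]
          simpa [win] using h4
        have hall : ∀ t, W (i + t) = W (i' + t) := by
          intro t
          induction t using Nat.strong_induction_on with
          | _ t ih =>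
            by_cases ht : t < N + pp
            · exact hpre t ht
            · have h1 : W (i + t) = W (i + (t - pp)) := by
                have := hper (i + (t - pp)) (by omega)
                rw [show i + (t-pp) + pp = i + t from by omega] at this
                exact this
              have h2 : W (i' + t) = W (i' + (t - pp)) := by
                have := hper (i' + (t - pp)) (by omega)
                rw [show i' + (t-pp) + pp = i' + t from by omega] at this
                exact this
              rw [h1, h2, ih (t - pp) (by omega)]
        rw [hu', hv', ← hlen]
        exact List.map_congr_left fun t _ => hall t
    · refine ⟨[], by simp [hKdef], ?_⟩
      rw [occ_nil, occ_nil]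
      omega

theorem hard_dir (W : ℕ → α) (h : HasFiniteSSF {x : List α | FactorOf x W}) :
    UltPeriodic W := by
  classical
  by_contra hnp
  obtain ⟨X, hXfin, hX⟩ := h
  obtain ⟨K, hK⟩ : ∃ K : ℕ, ∀ x ∈ X, x.length ≤ K := by
    have himg : (List.length '' X).Finite := hXfin.image _
    obtain ⟨K, hKub⟩ := himg.bddAbove
    exact ⟨K, fun x hx => hKub ⟨x, hx, rfl⟩⟩
  set k := K + 1 with hkdef
  haveI : Nonempty α := ⟨W 0⟩
  set d := Fintype.card (Fin k → α) with hddef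
  have hd1 : 1 ≤ d := Fintype.card_pos
  -- Step 1: pairs of equal k-windows within bounded distance, everywhere
  have P1 : ∀ m : ℕ, ∃ p g, m ≤ p ∧ 1 ≤ g ∧ g ≤ d ∧
      ∀ t, t < k → W (p + t) = W (p + g + t) := by
    intro m
    have hcard : Fintype.card (Fin k → α) < Fintype.card (Fin (d+1)) := by
      simp [hddef]
    obtain ⟨j, j', hne, heq⟩ := Fintype.exists_ne_map_eq_of_card_lt
      (fun j : Fin (d+1) => fun t : Fin k => W (m + j + t)) hcard
    have main : ∀ (a b : Fin (d+1)), a < b →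
        ((fun t : Fin k => W (m + a + t)) = fun t : Fin k => W (m + b + t)) →
        ∃ p g, m ≤ p ∧ 1 ≤ g ∧ g ≤ d ∧ ∀ t, t < k → W (p + t) = W (p + g + t) := by
      intro a b hab hfe
      refine ⟨m + a, (b : ℕ) - a, by omega, by
        have : (a:ℕ) < b := hab
        omega, by
        have hb := b.isLt
        omega, ?_⟩
      intro t ht
      have := congrFun hfe ⟨t, ht⟩
      simp only at this
      rw [show m + (a:ℕ) + (⟨t, ht⟩ : Fin k).val = m + a + t from rfl] at this
      rw [this]
      congr 1
      have : (a:ℕ) < b := hab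
      simp
      omega
    rcases Ne.lt_or_gt hne with hlt | hlt
    · exact main j j' hlt heq
    · exact main j' j hlt heq.symm
  choose p g hmp hg1 hgd hper using P1
  set G : ℕ → Fin (d+1) × (Fin (d + k) → α) :=
    fun m => (⟨g m, by have := hgd m; omega⟩, fun t => W (p m + t)) with hGdef
  obtain ⟨y, hy⟩ := Finite.exists_infinite_fiber G
  have hyinf : (G ⁻¹' {y}).Infinite := Set.infinite_coe_iff.mp hy
  obtain ⟨m₀, hm₀⟩ := hyinf.nonempty
  set s := p m₀ with hsdef
  set g₀ := g m₀ with hg₀def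
  have hg₀1 : 1 ≤ g₀ := hg1 m₀
  have hg₀d : g₀ ≤ d := hgd m₀
  have hww : ∀ t, t < k → W (s + t) = W (s + g₀ + t) := hper m₀
  -- first disagreement L
  have hexL : ∃ L, W (s + L) ≠ W (s + g₀ + L) := by
    by_contra hcl
    push_neg at hcl
    apply hnp
    refine ⟨s, g₀, by omega, ?_⟩
    intro n hn
    have := hcl (n - s)
    rw [show s + (n - s) = n from by omega] at this
    rw [show s + g₀ + (n - s) = n + g₀ from by omega] at this
    exact this.symm
  set L := Nat.find hexL with hLdef
  have hLne : W (s + L) ≠ W (s + g₀ + L) := Nat.find_spec hexL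
  -- a later element of the fiber
  obtain ⟨m₁, hm₁mem, hm₁gt⟩ := hyinf.exists_gt (s + L)
  set p₁ := p m₁ with hp₁def
  have hp₁ : s + L < p₁ := lt_of_lt_of_le hm₁gt (hmp m₁)
  have hGeq : G m₀ = G m₁ := by
    have h0 : G m₀ = y := hm₀
    have h1 : G m₁ = y := hm₁mem
    rw [h0, h1]
  have hgg : g m₁ = g₀ := by
    have := congrArg (fun z => (z.1 : ℕ)) hGeq
    simpa [hGdef] using this.symm
  have hWw : ∀ t, t < d + k → W (s + t) = W (p₁ + t) := by
    intro t ht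
    have h2 := congrArg Prod.snd hGeq
    have := congrFun h2 ⟨t, ht⟩
    simpa [hGdef] using this
  set ℓ := p₁ - s with hℓdef
  have hsℓ : s + ℓ = p₁ := by omega
  have hLℓ : L < ℓ := by omega
  set n := ℓ + K with hndef
  set u := win W s n with hudef
  set v := win W (s + g₀) n with hvdef
  have hufac : FactorOf u W := ⟨s, by simp [hudef, win]⟩
  have hvfac : FactorOf v W := ⟨s + g₀, by simp [hvdef, win]⟩
  have hune : u ≠ v := by
    intro he
    apply hLne
    have h4 : (win W s n)[L]'(by simp; omega) = (win W (s + g₀) n)[L]'(by simp; omega) := by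
      simp only [← hudef, ← hvdef, he]
    simpa [win] using h4
  -- occurrence counts agree for words of length exactly k
  have hock : ∀ x : List α, x.length = k → occ u x = occ v x := by
    intro x hxl
    have occ_win : ∀ a : ℕ, occ (win W a n) x =
        ∑ j ∈ Finset.range ℓ, if x = win W (a + j) k then (1:ℕ) else 0 := by
      intro a
      rw [occ_eq_sum, win_length]
      have step1 : ∀ i ∈ Finset.range (n+1),
          (if x <+: (win W a n).drop i then (1:ℕ) else 0) =
          if i < ℓ ∧ x = win W (a+i) k then (1:ℕ) else 0 := by
        intro i hi
        have hin : i ≤ n := by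
          have := Finset.mem_range.mp hi; omega
        have hiff : (x <+: (win W a n).drop i) ↔ (i < ℓ ∧ x = win W (a+i) k) := by
          rw [win_drop W hin, prefix_win_iff, hxl]
          constructor
          · rintro ⟨hh1, hh2⟩
            exact ⟨by omega, hh2⟩
          · rintro ⟨hh1, hh2⟩
            exact ⟨by omega, hh2⟩
        exact if_congr hiff rfl rfl
      rw [Finset.sum_congr rfl step1]
      rw [← Finset.sum_subset (Finset.range_subset_range.mpr (show ℓ ≤ n+1 by omega))
        (fun i _ hi => by
          have : ¬ i < ℓ := fun hc => hi (Finset.mem_range.mpr hc)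
          simp [this])]
      apply Finset.sum_congr rfl
      intro i hi
      have := Finset.mem_range.mp hi
      simp [this]
    have sum_add : ∀ (a m r : ℕ),
        (∑ j ∈ Finset.range (m+r), (if x = win W (a+j) k then (1:ℕ) else 0)) =
        (∑ j ∈ Finset.range m, if x = win W (a+j) k then (1:ℕ) else 0) +
        ∑ j ∈ Finset.range r, if x = win W (a+m+j) k then (1:ℕ) else 0 := by
      intro a m r
      rw [Finset.sum_range_add]
      congr 1
      apply Finset.sum_congr rfl
      intro j _
      rw [show a + (m + j) = a + m + j from by omega]
    have hshift : (∑ j ∈ Finset.range g₀, if x = win W (s+j) k then (1:ℕ) else 0) =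
        ∑ j ∈ Finset.range g₀, if x = win W (s+ℓ+j) k then (1:ℕ) else 0 := by
      apply Finset.sum_congr rfl
      intro j hj
      have hj' : j < g₀ := Finset.mem_range.mp hj
      have hwe : win W (s+j) k = win W (s+ℓ+j) k := by
        unfold win
        apply List.map_congr_left
        intro t ht
        have ht' : t < k := List.mem_range.mp ht
        have h1 : j + t < d + k := by omega
        have h2 := hWw (j + t) h1
        rw [show s + j + t = s + (j + t) from by omega,
          show s + ℓ + j + t = p₁ + (j + t) from by omega]
        exact h2
      rw [hwe]
    have e1 := sum_add s ℓ g₀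
    have e2 := sum_add s g₀ ℓ
    rw [show ℓ + g₀ = g₀ + ℓ from by omega] at e1
    have hu1 : occ u x = ∑ j ∈ Finset.range ℓ, if x = win W (s+j) k then (1:ℕ) else 0 :=
      occ_win s
    have hv1 : occ v x = ∑ j ∈ Finset.range ℓ, if x = win W (s+g₀+j) k then (1:ℕ) else 0 :=
      occ_win (s + g₀)
    omega
  -- extend to all shorter lengths
  have hwineq : ∀ j, j ≤ k → win W s j = win W (s + g₀) j := by
    intro j hj
    apply List.map_congr_left
    intro t ht
    exact hww t (lt_of_lt_of_le (List.mem_range.mp ht) hj)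
  have hocall : ∀ r, ∀ x : List α, x.length + r = k → occ u x = occ v x := by
    intro r
    induction r with
    | zero =>
      intro x hx
      exact hock x (by omega)
    | succ r ih =>
      intro x hx
      rw [occ_cons_sum u x, occ_cons_sum v x]
      have hs2 : (∑ a : α, occ u (a::x)) = ∑ a : α, occ v (a::x) :=
        Finset.sum_congr rfl fun a _ => ih (a::x) (by simp; omega)
      have hpre : (x <+: u) ↔ (x <+: v) := by
        rw [hudef, hvdef, prefix_win_iff, prefix_win_iff]
        have hxk : x.length ≤ k := by omega
        constructor
        · rintro ⟨hh1, hh2⟩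
          exact ⟨hh1, by rw [hwineq _ hxk] at hh2; exact hh2⟩
        · rintro ⟨hh1, hh2⟩
          exact ⟨hh1, by rw [← hwineq _ hxk] at hh2; exact hh2⟩
      rw [hs2]
      congr 1
      simp only [hpre]
  obtain ⟨x, hxX, hxne⟩ := hX u hufac v hvfac hune
  exact hxne (hocall (k - x.length) x (by have := hK x hxX; omega))

end Stmt19Aux

/-- The set of factors of an infinite word has a finite SSF iff the word is
ultimately periodic. -/
theorem stmt19 {α : Type*} [DecidableEq α] [Fintype α] (W : ℕ → α) :
    HasFiniteSSF {x : List α | FactorOf x W} ↔ UltPeriodic W :=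
  ⟨Stmt19Aux.hard_dir W, Stmt19Aux.easy_dir W⟩
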